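/- Let γ ≥ 0 and let g : ℝ → ℝ be an everywhere positive, strictly increasing function with g(0) = 1 that is differentiable at 0. Let f, F : ℝ → ℝ be everywhere positive functions, both differentiable at a point a ∈ ℝ. Suppose that for all a₁, a₂ ∈ ℝ, g(−γ·|a₁ − a₂|) ≤ (f(a₂)·F(a₁)) / (f(a₁)·F(a₂)) ≤ g(γ·|a₁ − a₂|). Then F′(a)/F(a) − γ·g′(0) ≤ f′(a)/f(a) ≤ F′(a)/F(a) + γ·g′(0). -/

import Mathlib

open Filter Topology Set


/-- Lemma 10, `g` marginal sensitivity model: if `g` is positive, strictly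
increasing, `g 0 = 1`, differentiable at `0`, and the odds ratio of the latent density
`f` against the observed density `F` at any two dose levels is bounded between
`g(-γ|a₁ - a₂|)` and `g(γ|a₁ - a₂|)`, then the latent score `f'/f` lies within
`γ⬝g'(0)` of the observed score `F'/F`. -/
theorem g_marginal_sensitivity_score_bound
    (γ : ℝ) (hγ : 0 ≤ γ) (g : ℝ → ℝ)
    (hgpos : ∀ x, 0 < g x) (hgmono : StrictMono g) (hg0 : g 0 = 1)
    (hgd : DifferentiableAt ℝ g 0)
    (f F : ℝ → ℝ)
    (hf : ∀ x, 0 < f x) (hF : ∀ x, 0 < F x) (a : ℝ)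
    (hfd : DifferentiableAt ℝ f a) (hFd : DifferentiableAt ℝ F a)
    (hmodel : ∀ a₁ a₂ : ℝ,
      g (-(γ * |a₁ - a₂|)) ≤ f a₂ * F a₁ / (f a₁ * F a₂) ∧
      f a₂ * F a₁ / (f a₁ * F a₂) ≤ g (γ * |a₁ - a₂|)) :
    deriv F a / F a - γ * deriv g 0 ≤ deriv f a / f a ∧
      deriv f a / f a ≤ deriv F a / F a + γ * deriv g 0 := by
  set s : ℝ := deriv f a / f a - deriv F a / F a with hs
  set r : ℝ → ℝ := fun x => Real.log (f x) - Real.log (F x) with hrdef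
  have hr : HasDerivAt r s a :=
    (hfd.hasDerivAt.log (ne_of_gt (hf a))).sub (hFd.hasDerivAt.log (ne_of_gt (hF a)))
  -- φ and ψ
  set φ : ℝ → ℝ := fun h => Real.log (g (γ * h)) with hφdef
  set ψ : ℝ → ℝ := fun h => Real.log (g (-(γ * h))) with hψdef
  have hginner : HasDerivAt (fun h : ℝ => g (γ * h)) (deriv g 0 * γ) 0 := by
    have h1 : HasDerivAt (fun h : ℝ => γ * h) γ 0 := by
      simpa using (hasDerivAt_id (0:ℝ)).const_mul γ
    have hg' : HasDerivAt g (deriv g 0) ((fun h : ℝ => γ * h) 0) := by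
      simpa using hgd.hasDerivAt
    exact hg'.comp 0 h1
  have hginner' : HasDerivAt (fun h : ℝ => g (-(γ * h))) (deriv g 0 * (-γ)) 0 := by
    have h1 : HasDerivAt (fun h : ℝ => -(γ * h)) (-γ) 0 := by
      have := ((hasDerivAt_id (0:ℝ)).const_mul γ).neg
      simp only [mul_one] at this
      exact this
    have hg' : HasDerivAt g (deriv g 0) ((fun h : ℝ => -(γ * h)) 0) := by
      simpa using hgd.hasDerivAt
    exact hg'.comp 0 h1
  have hφd : HasDerivAt φ (γ * deriv g 0) 0 := by
    have := hginner.log (by simp [hg0])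
    simpa [hg0, mul_comm] using this
  have hψd : HasDerivAt ψ (-(γ * deriv g 0)) 0 := by
    have := hginner'.log (by simp [hg0])
    have h2 : deriv g 0 * (-γ) / g (-(γ * 0)) = -(γ * deriv g 0) := by
      simp [hg0]; ring
    rw [h2] at this
    exact this
  have hφ0 : φ 0 = 0 := by simp [hφdef, hg0]
  have hψ0 : ψ 0 = 0 := by simp [hψdef, hg0]
  -- slopes
  have hrslope : Tendsto (slope r a) (𝓝[>] a) (𝓝 s) :=
    (hasDerivAt_iff_tendsto_slope.mp hr).mono_left
      (nhdsWithin_mono a (fun x hx => ne_of_gt hx))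
  have hsub : Tendsto (fun y => y - a) (𝓝[>] a) (𝓝[>] (0:ℝ)) := by
    apply tendsto_nhdsWithin_of_tendsto_nhds_of_eventually_within
    · have : Tendsto (fun y : ℝ => y - a) (𝓝 a) (𝓝 (a - a)) :=
        (continuous_id.sub continuous_const).tendsto a
      simpa using this.mono_left nhdsWithin_le_nhds
    · filter_upwards [self_mem_nhdsWithin] with y hy
      exact sub_pos.mpr (mem_Ioi.mp hy)
  have hφslope : Tendsto (fun y => slope φ 0 (y - a)) (𝓝[>] a) (𝓝 (γ * deriv g 0)) :=
    ((hasDerivAt_iff_tendsto_slope.mp hφd).mono_left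
      (nhdsWithin_mono 0 (fun x hx => ne_of_gt hx))).comp hsub
  have hψslope : Tendsto (fun y => slope ψ 0 (y - a)) (𝓝[>] a) (𝓝 (-(γ * deriv g 0))) :=
    ((hasDerivAt_iff_tendsto_slope.mp hψd).mono_left
      (nhdsWithin_mono 0 (fun x hx => ne_of_gt hx))).comp hsub
  -- key pointwise inequality
  have hkey : ∀ y ∈ Ioi a, slope ψ 0 (y - a) ≤ slope r a y ∧ slope r a y ≤ slope φ 0 (y - a) := by
    intro y hy
    have hya : 0 < y - a := sub_pos.mpr hy
    have habs : |a - y| = y - a := by rw [abs_sub_comm]; exact abs_of_pos hya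
    obtain ⟨h1, h2⟩ := hmodel a y
    have hratio : f y * F a / (f a * F y) = Real.exp (r y - r a) := by
      rw [hrdef]
      simp only
      rw [Real.exp_sub, Real.exp_sub, Real.exp_sub, Real.exp_log (hf y), Real.exp_log (hF y),
        Real.exp_log (hf a), Real.exp_log (hF a)]
      field_simp
    have hlog2 : r y - r a ≤ φ (y - a) := by
      have := h2
      rw [hratio, habs] at this
      have := Real.log_le_log (Real.exp_pos _) this
      rwa [Real.log_exp] at this
    have hlog1 : ψ (y - a) ≤ r y - r a := by
      have := h1
      rw [hratio, habs] at this
      have := Real.log_le_log (hgpos _) this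
      rwa [Real.log_exp] at this
    constructor
    · rw [slope_def_field, slope_def_field, hψ0, sub_zero, sub_zero]
      rw [div_le_div_iff₀ hya hya]
      nlinarith [hlog1]
    · rw [slope_def_field, slope_def_field, hφ0, sub_zero, sub_zero]
      rw [div_le_div_iff₀ hya hya]
      nlinarith [hlog2]
  have hub : s ≤ γ * deriv g 0 := by
    refine le_of_tendsto_of_tendsto hrslope hφslope ?_
    filter_upwards [self_mem_nhdsWithin] with y hy
    exact (hkey y hy).2
  have hlb : -(γ * deriv g 0) ≤ s := by
    refine le_of_tendsto_of_tendsto hψslope hrslope ?_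
    filter_upwards [self_mem_nhdsWithin] with y hy
    exact (hkey y hy).1
  rw [hs] at hub hlb
  constructor <;> linarith
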